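/- In the semi-infinite Weil complex $\mathcal W = \mathcal E\otimes\mathcal S$ of the Virasoro algebra, the image of the differential $[Q,-]$ is contained in the subspace $\mathcal D$ spanned by standard monomials in $\partial^n b, \partial^m c, \partial^s\beta, \partial^t\gamma$ which contain at least one derivative (some exponent positive). -/

import Mathlib

open scoped BigOperators

/-- Generalized binomial coefficient `m choose j` for an integer `m`, as a complex number. -/
noncomputable def zchoose (m : ℤ) (j : ℕ) : ℂ :=
  (∏ i ∈ Finset.range j, ((m : ℂ) - (i : ℂ))) / (Nat.factorial j : ℂ)

/-- A vertex superalgebra presented via its circle products `∘ₙ`, in the sense of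
Lian-Zuckerman (a commutative quantum operator algebra).  The parity grading is recorded by
the submodules `even`, `odd`; `comm_even`/`comm_odd` encode the Borcherds commutator formula
for the Fourier modes acting on the left regular module, and `iterate_even`/`iterate_odd`
encode the iterate (associativity) formula. -/
structure VA (V : Type) [AddCommGroup V] [Module ℂ V] where
  circ : ℤ → V →ₗ[ℂ] V →ₗ[ℂ] V
  one : V
  even : Submodule ℂ V
  odd : Submodule ℂ V
  one_even : one ∈ even
  circ_ee : ∀ (n : ℤ) {a b : V}, a ∈ even → b ∈ even → circ n a b ∈ even
  circ_oo : ∀ (n : ℤ) {a b : V}, a ∈ odd → b ∈ odd → circ n a b ∈ even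
  circ_eo : ∀ (n : ℤ) {a b : V}, a ∈ even → b ∈ odd → circ n a b ∈ odd
  circ_oe : ∀ (n : ℤ) {a b : V}, a ∈ odd → b ∈ even → circ n a b ∈ odd
  unit_left : ∀ (n : ℤ) (a : V), circ n one a = if n = -1 then a else 0
  unit_right_wick : ∀ a : V, circ (-1) a one = a
  unit_right_nonneg : ∀ (n : ℤ) (a : V), 0 ≤ n → circ n a one = 0
  truncate : ∀ a b : V, ∃ N : ℕ, ∀ n : ℤ, (N : ℤ) ≤ n → circ n a b = 0
  comm_even : ∀ {a b : V}, (a ∈ even ∨ b ∈ even) → ∀ (m n : ℤ) (c : V),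
    circ m a (circ n b c) - circ n b (circ m a c)
      = ∑ᶠ j : ℕ, zchoose m j • circ (m + n - (j : ℤ)) (circ (j : ℤ) a b) c
  comm_odd : ∀ {a b : V}, a ∈ odd → b ∈ odd → ∀ (m n : ℤ) (c : V),
    circ m a (circ n b c) + circ n b (circ m a c)
      = ∑ᶠ j : ℕ, zchoose m j • circ (m + n - (j : ℤ)) (circ (j : ℤ) a b) c
  iterate_even : ∀ {a b : V}, (a ∈ even ∨ b ∈ even) → ∀ (m n : ℤ) (c : V),
    circ m (circ n a b) c
      = ∑ᶠ j : ℕ, ((-1 : ℂ) ^ j * zchoose n j) •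
          (circ (n - (j : ℤ)) a (circ (m + (j : ℤ)) b c)
            - ((-1 : ℂ) ^ n) • circ (n + m - (j : ℤ)) b (circ (j : ℤ) a c))
  iterate_odd : ∀ {a b : V}, a ∈ odd → b ∈ odd → ∀ (m n : ℤ) (c : V),
    circ m (circ n a b) c
      = ∑ᶠ j : ℕ, ((-1 : ℂ) ^ j * zchoose n j) •
          (circ (n - (j : ℤ)) a (circ (m + (j : ℤ)) b c)
            + ((-1 : ℂ) ^ n) • circ (n + m - (j : ℤ)) b (circ (j : ℤ) a c))

namespace VA

variable {V : Type} [AddCommGroup V] [Module ℂ V] (A : VA V)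

/-- The formal derivative `∂a = a ∘₋₂ 1`. -/
def D (a : V) : V := A.circ (-2) a A.one

/-- The Wick (normally ordered) product `:ab: = a ∘₋₁ b`. -/
def wick (a b : V) : V := A.circ (-1) a b

end VA

namespace VA

/-- Iterated (right-normalized) Wick product of a list of elements. -/
def wlist {V : Type} [AddCommGroup V] [Module ℂ V] (A : VA V) : List V → V
  | [] => A.one
  | a :: l => A.wick a (wlist A l)

/-- Iterated Wick power. -/
def wpow {V : Type} [AddCommGroup V] [Module ℂ V] (A : VA V) (a : V) : ℕ → V
  | 0 => A.one
  | k + 1 => A.wick a (wpow A a k)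

end VA

namespace VA

variable {V : Type} [AddCommGroup V] [Module ℂ V]

/-- The standard monomial `:∂^{n₁}b ⋯ ∂^{nᵢ}b ∂^{m₁}c ⋯ ∂^{mⱼ}c ∂^{s₁}β ⋯ ∂^{sₖ}β ∂^{t₁}γ ⋯ ∂^{tₗ}γ:`. -/
def stdMon (A : VA V) (b c β γ : V) (ns ms ss ts : List ℕ) : V :=
  wlist A ((ns.map fun k => A.D^[k] b) ++ (ms.map fun k => A.D^[k] c)
    ++ (ss.map fun k => A.D^[k] β) ++ (ts.map fun k => A.D^[k] γ))

/-- The set of all standard monomials. -/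
def StdSet (A : VA V) (b c β γ : V) : Set V :=
  {v | ∃ ns ms ss ts : List ℕ,
    List.Chain' (· > ·) ns ∧ List.Chain' (· > ·) ms ∧
    List.Chain' (· ≥ ·) ss ∧ List.Chain' (· ≥ ·) ts ∧
    v = stdMon A b c β γ ns ms ss ts}

/-- The set of standard monomials containing at least one derivative. -/
def DSet (A : VA V) (b c β γ : V) : Set V :=
  {v | ∃ ns ms ss ts : List ℕ,
    List.Chain' (· > ·) ns ∧ List.Chain' (· > ·) ms ∧
    List.Chain' (· ≥ ·) ss ∧ List.Chain' (· ≥ ·) ts ∧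
    (∃ k ∈ ns ++ ms ++ ss ++ ts, 0 < k) ∧
    v = stdMon A b c β γ ns ms ss ts}

end VA

lemma zchoose_zero_left (j : ℕ) : zchoose 0 j = if j = 0 then 1 else 0 := by
  cases j with
  | zero => simp [zchoose]
  | succ n =>
    simp only [zchoose, Nat.succ_ne_zero, if_false]
    rw [Finset.prod_eq_zero (Finset.mem_range.2 (Nat.succ_pos n))]
    · simp
    · simp

lemma zchoose_neg_one (j : ℕ) : zchoose (-1) j = (-1 : ℂ) ^ j := by
  have h : (∏ i ∈ Finset.range j, ((-1 : ℂ) - (i : ℂ))) = (-1 : ℂ)^j * (Nat.factorial j : ℂ) := by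
    induction j with
    | zero => simp
    | succ n ih =>
      rw [Finset.prod_range_succ, ih, Nat.factorial_succ]
      push_cast
      ring
  have hf : ((Nat.factorial j : ℂ)) ≠ 0 := by
    exact_mod_cast Nat.cast_ne_zero.2 (Nat.factorial_ne_zero j)
  simp only [zchoose]
  push_cast
  rw [h]
  field_simp

lemma zchoose_neg_two (j : ℕ) : zchoose (-2) j = (-1 : ℂ) ^ j * (j + 1) := by
  have h : (∏ i ∈ Finset.range j, ((-2 : ℂ) - (i : ℂ))) = (-1 : ℂ)^j * (Nat.factorial (j+1) : ℂ) := by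
    induction j with
    | zero => simp
    | succ n ih =>
      rw [Finset.prod_range_succ, ih, Nat.factorial_succ (n+1)]
      push_cast
      ring
  have hf : ((Nat.factorial j : ℂ)) ≠ 0 := by
    exact_mod_cast Nat.cast_ne_zero.2 (Nat.factorial_ne_zero j)
  simp only [zchoose]
  push_cast at h ⊢
  rw [h, Nat.factorial_succ]
  push_cast
  field_simp

lemma zchoose_nat_self (m : ℕ) : zchoose (m : ℤ) m = 1 := by
  have h : ∀ m : ℕ, (∏ i ∈ Finset.range m, ((m : ℂ) - (i : ℂ))) = (Nat.factorial m : ℂ) := by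
    intro m
    induction m with
    | zero => simp
    | succ n ih =>
      rw [Finset.prod_range_succ']
      push_cast
      have : (∏ i ∈ Finset.range n, ((n : ℂ) + 1 - ((i : ℂ) + 1))) = (Nat.factorial n : ℂ) := by
        rw [← ih]; apply Finset.prod_congr rfl; intro i _; ring
      rw [this, Nat.factorial_succ]
      push_cast
      ring
  have hf : ((Nat.factorial m : ℂ)) ≠ 0 := by
    exact_mod_cast Nat.cast_ne_zero.2 (Nat.factorial_ne_zero m)
  simp only [zchoose]
  push_cast
  rw [h]
  field_simp
section FinsumHelpers

variable {V : Type} [AddCommGroup V] [Module ℂ V]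

lemma finsum_mem_submodule (f : ℕ → V) (P : Submodule ℂ V)
    (hmem : ∀ j, f j ∈ P) (hvan : ∃ N : ℕ, ∀ j, N ≤ j → f j = 0) :
    (∑ᶠ j : ℕ, f j) ∈ P := by
  obtain ⟨N, hN⟩ := hvan
  have hsupp : Function.support f ⊆ (Finset.range N : Finset ℕ) := by
    intro j hj
    simp only [Finset.coe_range, Set.mem_Iio]
    by_contra h
    exact hj (hN j (le_of_not_gt h))
  rw [finsum_eq_sum_of_support_subset f hsupp]
  exact Submodule.sum_mem _ fun j _ => hmem j

lemma finsum_zchoose_zero (g : ℕ → V) :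
    (∑ᶠ j : ℕ, zchoose 0 j • g j) = g 0 := by
  have h : ∀ x : ℕ, x ≠ 0 → zchoose 0 x • g x = 0 := by
    intro x hx
    rw [zchoose_zero_left, if_neg hx, zero_smul]
  rw [finsum_eq_single _ 0 h, zchoose_zero_left, if_pos rfl, one_smul]

end FinsumHelpers

namespace VA

variable {V : Type} [AddCommGroup V] [Module ℂ V] (A : VA V)

/-- parity predicate: `p = true` means odd, `p = false` means even. -/
def pOf (v : V) (p : Bool) : Prop := if p then v ∈ A.odd else v ∈ A.even

/-- Koszul sign for two parities. -/
noncomputable def sgn (p q : Bool) : ℂ := if p && q then -1 else 1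

lemma pOf_D {v : V} {p : Bool} (h : A.pOf v p) : A.pOf (A.D v) p := by
  cases p with
  | false => exact A.circ_ee _ h A.one_even
  | true => exact A.circ_oe _ h A.one_even

lemma pOf_D_iter {v : V} {p : Bool} (h : A.pOf v p) (k : ℕ) : A.pOf (A.D^[k] v) p := by
  induction k with
  | zero => exact h
  | succ n ih => rw [Function.iterate_succ_apply']; exact A.pOf_D ih

lemma pOf_even {a : V} (h : A.pOf a false) : a ∈ A.even := h

lemma pOf_odd {a : V} (h : A.pOf a true) : a ∈ A.odd := h

lemma comm_par {a b : V} {pa pb : Bool} (ha : A.pOf a pa) (hb : A.pOf b pb)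
    (m n : ℤ) (c : V) :
    A.circ m a (A.circ n b c)
      = sgn pa pb • A.circ n b (A.circ m a c)
        + ∑ᶠ j : ℕ, zchoose m j • A.circ (m + n - (j : ℤ)) (A.circ (j : ℤ) a b) c := by
  cases pa with
  | false =>
    have h := A.comm_even (a := a) (b := b) (Or.inl (A.pOf_even ha)) m n c
    simp only [sgn, Bool.false_and, Bool.false_eq_true, if_false, one_smul, ← h]
    abel
  | true =>
    cases pb with
    | false =>
      have h := A.comm_even (a := a) (b := b) (Or.inr (A.pOf_even hb)) m n c
      simp only [sgn, Bool.and_false, Bool.false_eq_true, if_false, one_smul, ← h]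
      abel
    | true =>
      have h := A.comm_odd (A.pOf_odd ha) (A.pOf_odd hb) m n c
      simp only [sgn, Bool.and_self, if_true, neg_smul, one_smul, ← h]
      abel

lemma iterate_par {a b : V} {pa pb : Bool} (ha : A.pOf a pa) (hb : A.pOf b pb)
    (m n : ℤ) (c : V) :
    A.circ m (A.circ n a b) c
      = ∑ᶠ j : ℕ, ((-1 : ℂ) ^ j * zchoose n j) •
          (A.circ (n - (j : ℤ)) a (A.circ (m + (j : ℤ)) b c)
            - (sgn pa pb * ((-1 : ℂ) ^ n)) • A.circ (n + m - (j : ℤ)) b (A.circ (j : ℤ) a c)) := by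
  cases pa with
  | false =>
    rw [A.iterate_even (a := a) (b := b) (Or.inl (A.pOf_even ha)) m n c]
    apply finsum_congr; intro j
    simp only [sgn, Bool.false_and, Bool.false_eq_true, if_false, one_mul]
  | true =>
    cases pb with
    | false =>
      rw [A.iterate_even (a := a) (b := b) (Or.inr (A.pOf_even hb)) m n c]
      apply finsum_congr; intro j
      simp only [sgn, Bool.and_false, Bool.false_eq_true, if_false, one_mul]
    | true =>
      rw [A.iterate_odd (A.pOf_odd ha) (A.pOf_odd hb) m n c]
      apply finsum_congr; intro j
      simp only [sgn, Bool.and_self, if_true, neg_mul, one_mul, neg_smul, sub_neg_eq_add]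

end VA
namespace VA

variable {V : Type} [AddCommGroup V] [Module ℂ V] (A : VA V)

lemma neg_one_zpow_neg_two : ((-1 : ℂ) ^ (-2 : ℤ)) = 1 := by
  rw [zpow_neg]
  norm_num

lemma circ_D (a x : V) (m : ℤ) :
    A.circ m (A.D a) x = (-(m : ℂ)) • A.circ (m - 1) a x := by
  have key := A.iterate_even (a := a) (b := A.one) (Or.inr A.one_even) m (-2) x
  rw [VA.D, key, neg_one_zpow_neg_two]
  obtain ⟨k, rfl | rfl⟩ := Int.eq_nat_or_neg m
  · cases k with
    | zero =>
      rw [finsum_eq_zero_of_forall_eq_zero ?_]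
      · norm_num
      · intro j
        rw [A.unit_left, A.unit_left]
        rw [if_neg (by omega), if_neg (by omega)]
        simp
    | succ k =>
      rw [finsum_eq_single _ k ?_]
      · rw [A.unit_left, A.unit_left, if_neg (by push_cast; omega), if_pos (by push_cast; omega),
          zchoose_neg_two]
        simp only [map_zero, LinearMap.zero_apply, zero_sub, one_smul, smul_neg, smul_smul]
        rw [show ((-1:ℂ)^k * ((-1:ℂ)^k * ((k:ℂ)+1))) = ((k:ℂ)+1) by
          rw [← mul_assoc, ← mul_pow]; norm_num]
        rw [show (((k+1 : ℕ) : ℤ)) - 1 = ((k:ℕ) : ℤ) by push_cast; omega, ← neg_smul]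
        push_cast
        module
      · intro j hj
        rw [A.unit_left, A.unit_left, if_neg (by push_cast; omega),
          if_neg (by push_cast; omega)]
        simp
  · cases k with
    | zero =>
      rw [finsum_eq_zero_of_forall_eq_zero ?_]
      · norm_num
      · intro j
        rw [A.unit_left, A.unit_left]
        rw [if_neg (by omega), if_neg (by omega)]
        simp
    | succ k =>
      rw [finsum_eq_single _ k ?_]
      · rw [A.unit_left, A.unit_left, if_pos (by push_cast; omega), if_neg (by push_cast; omega),
          zchoose_neg_two]
        simp only [map_zero, LinearMap.zero_apply, smul_zero, one_smul, sub_zero, smul_smul]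
        rw [show ((-1:ℂ)^k * ((-1:ℂ)^k * ((k:ℂ)+1))) = ((k:ℂ)+1) by
          rw [← mul_assoc, ← mul_pow]; norm_num]
        rw [show (-((k+1 : ℕ) : ℤ)) - 1 = -2 - ((k:ℕ):ℤ) by push_cast; omega]
        push_cast
        module
      · intro j hj
        rw [A.unit_left, A.unit_left, if_neg (by push_cast; omega),
          if_neg (by push_cast; omega)]
        simp

lemma circ_zero_D (a x : V) : A.circ 0 (A.D a) x = 0 := by
  rw [A.circ_D]
  norm_num

/-- `(D^[j] a) ∘₋₁ x = j! • a ∘₋₁₋ⱼ x`. -/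
lemma circ_D_iter (a x : V) (j : ℕ) :
    A.circ (-1) (A.D^[j] a) x = ((Nat.factorial j : ℂ)) • A.circ (-1 - (j : ℤ)) a x := by
  induction j generalizing a with
  | zero => simp
  | succ n ih =>
    rw [Function.iterate_succ_apply, ih, A.circ_D]
    rw [smul_smul, Nat.factorial_succ]
    push_cast
    rw [show (-1 - (n:ℤ) - 1) = (-1 - ((n:ℕ)+1 : ℤ)) by push_cast; omega]
    push_cast
    ring_nf

lemma circ_neg_mode (a x : V) (j : ℕ) :
    A.circ (-1 - (j : ℤ)) a x = ((Nat.factorial j : ℂ))⁻¹ • A.circ (-1) (A.D^[j] a) x := by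
  rw [A.circ_D_iter, smul_smul]
  rw [inv_mul_cancel₀ (by exact_mod_cast Nat.cast_ne_zero.2 (Nat.factorial_ne_zero j))]
  rw [one_smul]

end VA
/-! ### Letters and context -/

inductive G4 : Type
  | gb | gc | gB | gG
deriving DecidableEq

def G4.isOdd : G4 → Bool
  | G4.gb => true
  | G4.gc => true
  | G4.gB => false
  | G4.gG => false

abbrev Letter : Type := G4 × ℕ

def degL (ℓ : Letter) : ℕ := ℓ.2

def totalDeg (w : List Letter) : ℕ := (w.map degL).sum

/-- Bundled context for the semi-infinite Weil complex. -/
structure Ctx (V : Type) [AddCommGroup V] [Module ℂ V] where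
  A : VA V
  b : V
  c : V
  β : V
  γ : V
  J : V
  hb : b ∈ A.odd
  hc : c ∈ A.odd
  hβ : β ∈ A.even
  hγ : γ ∈ A.even
  hbc0 : A.circ 0 b c = A.one
  hbc : ∀ n : ℤ, 1 ≤ n → A.circ n b c = 0
  hcb0 : A.circ 0 c b = A.one
  hcb : ∀ n : ℤ, 1 ≤ n → A.circ n c b = 0
  hbb : ∀ n : ℤ, 0 ≤ n → A.circ n b b = 0
  hcc : ∀ n : ℤ, 0 ≤ n → A.circ n c c = 0
  hβγ0 : A.circ 0 β γ = A.one
  hβγ : ∀ n : ℤ, 1 ≤ n → A.circ n β γ = 0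
  hγβ0 : A.circ 0 γ β = -A.one
  hγβ : ∀ n : ℤ, 1 ≤ n → A.circ n γ β = 0
  hββ : ∀ n : ℤ, 0 ≤ n → A.circ n β β = 0
  hγγ : ∀ n : ℤ, 0 ≤ n → A.circ n γ γ = 0
  hcross : ∀ n : ℤ, 0 ≤ n →
      A.circ n b β = 0 ∧ A.circ n b γ = 0 ∧ A.circ n c β = 0 ∧ A.circ n c γ = 0 ∧
      A.circ n β b = 0 ∧ A.circ n γ b = 0 ∧ A.circ n β c = 0 ∧ A.circ n γ c = 0
  hJ : J = A.wick ((A.wick (A.D β) γ + (2 : ℂ) • A.wick β (A.D γ))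
          + (1 / 2 : ℂ) • (-(A.wick (A.D b) c) - (2 : ℂ) • A.wick b (A.D c))) c
        + (3 / 4 : ℂ) • A.D (A.D c)

namespace Ctx

variable {V : Type} [AddCommGroup V] [Module ℂ V] (C : Ctx V)

def gen : G4 → V
  | G4.gb => C.b
  | G4.gc => C.c
  | G4.gB => C.β
  | G4.gG => C.γ

def ι (ℓ : Letter) : V := C.A.D^[ℓ.2] (C.gen ℓ.1)

lemma par_gen (g : G4) : C.A.pOf (C.gen g) g.isOdd := by
  cases g
  · exact C.hb
  · exact C.hc
  · exact C.hβ
  · exact C.hγ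

lemma par_ι (ℓ : Letter) : C.A.pOf (C.ι ℓ) ℓ.1.isOdd :=
  C.A.pOf_D_iter (C.par_gen ℓ.1) ℓ.2

/-- pairing of two basic generators. -/
lemma pair0 (g₁ g₂ : G4) (m : ℕ) :
    ∃ κ : ℂ, C.A.circ (m : ℤ) (C.gen g₁) (C.gen g₂) = κ • C.A.one ∧ (κ ≠ 0 → m = 0) := by
  have z : ∀ (v : V) (P : Prop), v = 0 →
      ∃ κ : ℂ, v = κ • C.A.one ∧ (κ ≠ 0 → P) := by
    intro v P h
    exact ⟨0, by simp [h], fun h' => absurd rfl h'⟩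
  cases m with
  | zero =>
    have h0 : ((0 : ℕ) : ℤ) = (0 : ℤ) := rfl
    cases g₁ <;> cases g₂ <;> simp only [gen, Nat.cast_zero]
    · exact z _ _ (C.hbb 0 le_rfl)
    · exact ⟨1, by rw [C.hbc0, one_smul], fun _ => by trivial⟩
    · exact z _ _ (C.hcross 0 le_rfl).1
    · exact z _ _ (C.hcross 0 le_rfl).2.1
    · exact ⟨1, by rw [C.hcb0, one_smul], fun _ => by trivial⟩
    · exact z _ _ (C.hcc 0 le_rfl)
    · exact z _ _ (C.hcross 0 le_rfl).2.2.1
    · exact z _ _ (C.hcross 0 le_rfl).2.2.2.1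
    · exact z _ _ (C.hcross 0 le_rfl).2.2.2.2.1
    · exact z _ _ (C.hcross 0 le_rfl).2.2.2.2.2.2.1
    · exact z _ _ (C.hββ 0 le_rfl)
    · exact ⟨1, by rw [C.hβγ0, one_smul], fun _ => by trivial⟩
    · exact z _ _ (C.hcross 0 le_rfl).2.2.2.2.2.1
    · exact z _ _ (C.hcross 0 le_rfl).2.2.2.2.2.2.2
    · exact ⟨-1, by rw [C.hγβ0, neg_one_smul], fun _ => by trivial⟩
    · exact z _ _ (C.hγγ 0 le_rfl)
  | succ m' =>
    have h1 : (1 : ℤ) ≤ ((m' + 1 : ℕ) : ℤ) := by exact_mod_cast Nat.succ_le_succ (Nat.zero_le m')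
    have h0 : (0 : ℤ) ≤ ((m' + 1 : ℕ) : ℤ) := le_trans zero_le_one h1
    cases g₁ <;> cases g₂ <;> simp only [gen]
    · exact z _ _ (C.hbb _ h0)
    · exact z _ _ (C.hbc _ h1)
    · exact z _ _ (C.hcross _ h0).1
    · exact z _ _ (C.hcross _ h0).2.1
    · exact z _ _ (C.hcb _ h1)
    · exact z _ _ (C.hcc _ h0)
    · exact z _ _ (C.hcross _ h0).2.2.1
    · exact z _ _ (C.hcross _ h0).2.2.2.1
    · exact z _ _ (C.hcross _ h0).2.2.2.2.1
    · exact z _ _ (C.hcross _ h0).2.2.2.2.2.2.1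
    · exact z _ _ (C.hββ _ h0)
    · exact z _ _ (C.hβγ _ h1)
    · exact z _ _ (C.hcross _ h0).2.2.2.2.2.1
    · exact z _ _ (C.hcross _ h0).2.2.2.2.2.2.2
    · exact z _ _ (C.hγβ _ h1)
    · exact z _ _ (C.hγγ _ h0)

end Ctx
namespace VA

variable {V : Type} [AddCommGroup V] [Module ℂ V] (A : VA V)

lemma pair_D_right {x y : V} {px py : Bool} (hx : A.pOf x px) (hy : A.pOf y py) (d : ℕ)
    (h : ∀ m : ℕ, ∃ κ : ℂ, A.circ (m : ℤ) x y = κ • A.one ∧ (κ ≠ 0 → m = d)) :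
    ∀ m : ℕ, ∃ κ : ℂ, A.circ (m : ℤ) x (A.D y) = κ • A.one ∧ (κ ≠ 0 → m = d + 1) := by
  choose κ hκ hκ0 using h
  intro m
  have key := A.comm_par hx hy (m : ℤ) (-2) A.one
  rw [A.unit_right_nonneg _ x (by exact_mod_cast Nat.zero_le m)] at key
  simp only [map_zero, smul_zero, zero_add] at key
  have hterm : ∀ j : ℕ,
      zchoose (m : ℤ) j • A.circ ((m : ℤ) + -2 - (j : ℤ)) (A.circ (j : ℤ) x y) A.one
        = if j + 1 = m then (zchoose (m : ℤ) j * κ j) • A.one else 0 := by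
    intro j
    rw [hκ j, map_smul, LinearMap.smul_apply, A.unit_left]
    by_cases hc : ((m : ℤ) + -2 - (j : ℤ)) = -1
    · rw [if_pos hc, if_pos (by omega), smul_smul]
    · rw [if_neg hc, if_neg (by omega), smul_zero, smul_zero]
  cases m with
  | zero =>
    refine ⟨0, ?_, fun h' => absurd rfl h'⟩
    rw [zero_smul, show A.D y = A.circ (-2) y A.one from rfl, key,
      finsum_eq_zero_of_forall_eq_zero ?_]
    intro j
    rw [hterm j, if_neg (by omega)]
  | succ m' =>
    refine ⟨zchoose ((m' + 1 : ℕ) : ℤ) m' * κ m', ?_, fun h' => by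
      have := hκ0 m' (fun hz => h' (by rw [hz, mul_zero]))
      omega⟩
    rw [show A.D y = A.circ (-2) y A.one from rfl, key,
      finsum_eq_single _ m' ?_, hterm m', if_pos rfl]
    intro j hj
    rw [hterm j, if_neg (by omega)]

lemma pair_D_left (x y : V) (d : ℕ)
    (h : ∀ m : ℕ, ∃ κ : ℂ, A.circ (m : ℤ) x y = κ • A.one ∧ (κ ≠ 0 → m = d)) :
    ∀ m : ℕ, ∃ κ : ℂ, A.circ (m : ℤ) (A.D x) y = κ • A.one ∧ (κ ≠ 0 → m = d + 1) := by
  choose κ hκ hκ0 using h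
  intro m
  cases m with
  | zero =>
    refine ⟨0, ?_, fun h' => absurd rfl h'⟩
    rw [A.circ_D]
    norm_num
  | succ m' =>
    refine ⟨-((m' + 1 : ℕ) : ℂ) * κ m', ?_, fun h' => by
      have := hκ0 m' (fun hz => h' (by rw [hz, mul_zero]))
      omega⟩
    rw [A.circ_D, show ((m' + 1 : ℕ) : ℤ) - 1 = ((m' : ℕ) : ℤ) by push_cast; omega, hκ m',
      smul_smul]
    push_cast
    ring_nf

end VA

namespace Ctx

variable {V : Type} [AddCommGroup V] [Module ℂ V] (C : Ctx V)

lemma pair (x y : Letter) (m : ℕ) :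
    ∃ κ : ℂ, C.A.circ (m : ℤ) (C.ι x) (C.ι y) = κ • C.A.one
      ∧ (κ ≠ 0 → m = degL x + degL y) := by
  obtain ⟨g₁, k₁⟩ := x
  obtain ⟨g₂, k₂⟩ := y
  show ∃ κ : ℂ, C.A.circ (m : ℤ) (C.A.D^[k₁] (C.gen g₁)) (C.A.D^[k₂] (C.gen g₂)) = κ • C.A.one
      ∧ (κ ≠ 0 → m = k₁ + k₂)
  induction k₁ generalizing m with
  | zero =>
    simp only [Function.iterate_zero_apply]
    induction k₂ generalizing m with
    | zero =>
      obtain ⟨κ, h1, h2⟩ := C.pair0 g₁ g₂ m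
      exact ⟨κ, h1, fun h => by have := h2 h; omega⟩
    | succ n ih =>
      rw [Function.iterate_succ_apply']
      obtain ⟨κ, h1, h2⟩ := C.A.pair_D_right (C.par_gen g₁) (C.A.pOf_D_iter (C.par_gen g₂) n)
        (0 + n) (fun m' => by
          obtain ⟨κ', e1, e2⟩ := ih m'
          exact ⟨κ', e1, fun h => by have := e2 h; omega⟩) m
      exact ⟨κ, h1, fun h => by have := h2 h; omega⟩
  | succ n ih =>
    rw [Function.iterate_succ_apply']
    obtain ⟨κ, h1, h2⟩ := C.A.pair_D_left (C.A.D^[n] (C.gen g₁)) (C.A.D^[k₂] (C.gen g₂)) (n + k₂)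
      (fun m' => ih m') m
    exact ⟨κ, h1, fun h => by have := h2 h; omega⟩

end Ctx
namespace VA

variable {V : Type} [AddCommGroup V] [Module ℂ V] (A : VA V)

lemma wlist_cons (a : V) (l : List V) : A.wlist (a :: l) = A.wick a (A.wlist l) := rfl

lemma wlist_nil : A.wlist ([] : List V) = A.one := rfl

end VA

namespace Ctx

variable {V : Type} [AddCommGroup V] [Module ℂ V] (C : Ctx V)

/-- Span of wick words of letters of total derivative degree at least `d`. -/
def GE (d : ℤ) : Submodule ℂ V :=
  Submodule.span ℂ {v | ∃ w : List Letter, d ≤ (totalDeg w : ℤ) ∧ v = C.A.wlist (w.map C.ι)}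

lemma GE_mono {d d' : ℤ} (h : d' ≤ d) : C.GE d ≤ C.GE d' := by
  apply Submodule.span_mono
  rintro v ⟨w, hw, rfl⟩
  exact ⟨w, le_trans h hw, rfl⟩

lemma mem_GE (w : List Letter) {d : ℤ} (h : d ≤ (totalDeg w : ℤ)) :
    C.A.wlist (w.map C.ι) ∈ C.GE d :=
  Submodule.subset_span ⟨w, h, rfl⟩

lemma totalDeg_cons (ℓ : Letter) (u : List Letter) :
    totalDeg (ℓ :: u) = degL ℓ + totalDeg u := rfl

lemma wick_GE (ℓ : Letter) {d : ℤ} {v : V} (hv : v ∈ C.GE d) :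
    C.A.wick (C.ι ℓ) v ∈ C.GE (d + (degL ℓ : ℤ)) := by
  induction hv using Submodule.span_induction with
  | mem x hx =>
    obtain ⟨w, hw, rfl⟩ := hx
    have : C.A.wick (C.ι ℓ) (C.A.wlist (w.map C.ι)) = C.A.wlist ((ℓ :: w).map C.ι) := rfl
    rw [this]
    exact C.mem_GE _ (by rw [totalDeg_cons]; push_cast; omega)
  | zero => rw [show C.A.wick (C.ι ℓ) 0 = 0 from map_zero _]; exact Submodule.zero_mem _
  | add x y _ _ hx hy =>
    rw [show C.A.wick (C.ι ℓ) (x + y) = C.A.wick (C.ι ℓ) x + C.A.wick (C.ι ℓ) y from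
      map_add _ _ _]
    exact Submodule.add_mem _ hx hy
  | smul t x _ hx =>
    rw [show C.A.wick (C.ι ℓ) (t • x) = t • C.A.wick (C.ι ℓ) x from map_smul _ _ _]
    exact Submodule.smul_mem _ _ hx

/-- Nonnegative modes of a letter acting on a wick word: contraction bookkeeping. -/
lemma mode_wlist (a : Letter) (m : ℕ) (u : List Letter) :
    C.A.circ (m : ℤ) (C.ι a) (C.A.wlist (u.map C.ι))
      ∈ C.GE ((degL a : ℤ) + (totalDeg u : ℤ) - (m : ℤ)) := by
  induction u with
  | nil =>
    rw [List.map_nil, VA.wlist_nil, C.A.unit_right_nonneg _ _ (by exact_mod_cast Nat.zero_le m)]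
    exact Submodule.zero_mem _
  | cons h u ih =>
    rw [List.map_cons, VA.wlist_cons, VA.wick]
    rw [C.A.comm_par (C.par_ι a) (C.par_ι h) (m : ℤ) (-1) (C.A.wlist (u.map C.ι))]
    apply Submodule.add_mem
    · apply Submodule.smul_mem
      have := C.wick_GE h ih
      refine C.GE_mono ?_ this
      rw [totalDeg_cons]
      push_cast
      omega
    · choose κ hκ hκ0 using C.pair a h
      have hterm : ∀ j : ℕ,
          zchoose (m : ℤ) j • C.A.circ ((m : ℤ) + -1 - (j : ℤ)) (C.A.circ (j : ℤ) (C.ι a) (C.ι h))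
              (C.A.wlist (u.map C.ι))
            = if j = m then (zchoose (m : ℤ) j * κ j) • C.A.wlist (u.map C.ι) else 0 := by
        intro j
        rw [hκ j, map_smul, LinearMap.smul_apply, C.A.unit_left]
        by_cases hc : ((m : ℤ) + -1 - (j : ℤ)) = -1
        · rw [if_pos hc, if_pos (by omega), smul_smul]
        · rw [if_neg hc, if_neg (by omega), smul_zero, smul_zero]
      rw [finsum_eq_single _ m (fun j hj => by rw [hterm j, if_neg hj]), hterm m, if_pos rfl,
        zchoose_nat_self, one_mul]
      by_cases hz : κ m = 0
      · rw [hz, zero_smul]; exact Submodule.zero_mem _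
      · apply Submodule.smul_mem
        have hd := hκ0 m hz
        refine C.GE_mono ?_ (C.mem_GE u le_rfl)
        rw [totalDeg_cons]
        push_cast
        omega

end Ctx
namespace Ctx

variable {V : Type} [AddCommGroup V] [Module ℂ V] (C : Ctx V)

lemma ι_up (g : G4) (k j : ℕ) : C.A.D^[j] (C.ι (g, k)) = C.ι (g, j + k) := by
  rw [ι, ι, ← Function.iterate_add_apply]

/-- Negative modes of a letter map `GE e` into `GE (e + deg + j)`. -/
lemma negmode_GE (x : Letter) (j : ℕ) {e : ℤ} {v : V} (hv : v ∈ C.GE e) :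
    C.A.circ (-1 - (j : ℤ)) (C.ι x) v ∈ C.GE (e + (degL x : ℤ) + (j : ℤ)) := by
  rw [C.A.circ_neg_mode]
  apply Submodule.smul_mem
  obtain ⟨g, k⟩ := x
  rw [C.ι_up g k j]
  have := C.wick_GE (g, j + k) hv
  rw [VA.wick] at this
  refine C.GE_mono ?_ this
  show e + (degL (g, k) : ℤ) + (j : ℤ) ≤ e + ((degL (g, j + k)) : ℤ)
  show e + (k : ℤ) + (j : ℤ) ≤ e + ((j + k : ℕ) : ℤ)
  push_cast
  omega

/-- Un-nesting: a wick pair of letters applied to a wick word stays in the graded span. -/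
lemma wickpair_wlist (x y : Letter) (t : List Letter) :
    C.A.wick (C.A.wick (C.ι x) (C.ι y)) (C.A.wlist (t.map C.ι))
      ∈ C.GE ((degL x : ℤ) + (degL y : ℤ) + (totalDeg t : ℤ)) := by
  set T := C.A.wlist (t.map C.ι) with hT
  rw [VA.wick, VA.wick]
  rw [C.A.iterate_par (C.par_ι x) (C.par_ι y) (-1) (-1) T]
  apply finsum_mem_submodule
  · intro j
    apply Submodule.smul_mem
    apply Submodule.sub_mem
    · cases j with
      | zero =>
        norm_num
        have h1 : C.A.circ (-1) (C.ι x) (C.A.circ (-1) (C.ι y) T)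
            = C.A.wlist ((x :: y :: t).map C.ι) := rfl
        rw [h1]
        apply C.mem_GE
        rw [totalDeg_cons, totalDeg_cons]
        push_cast
        omega
      | succ i =>
        have h1 : (-1 + ((i + 1 : ℕ) : ℤ)) = ((i : ℕ) : ℤ) := by push_cast; omega
        rw [h1]
        have h2 := C.mode_wlist y i t
        have h3 := C.negmode_GE x (i + 1) h2
        rw [show (-1 - ((i + 1 : ℕ) : ℤ)) = (-1 - ((i+1 : ℕ) : ℤ)) by norm_num] at h3
        refine C.GE_mono ?_ h3
        push_cast
        omega
    · apply Submodule.smul_mem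
      have h2 := C.mode_wlist x j t
      have h3 := C.negmode_GE y (j + 1) h2
      rw [show (-1 - ((j + 1 : ℕ) : ℤ)) = (-1 + -1 - ((j:ℕ) : ℤ)) by push_cast; omega] at h3
      refine C.GE_mono ?_ h3
      push_cast
      omega
  · obtain ⟨N₁, hN₁⟩ := C.A.truncate (C.ι y) T
    obtain ⟨N₂, hN₂⟩ := C.A.truncate (C.ι x) T
    refine ⟨max (N₁ + 1) N₂, fun j hj => ?_⟩
    rw [hN₁ (-1 + (j : ℤ)) (by push_cast; omega), hN₂ (j : ℤ) (by push_cast; omega)]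
    simp

end Ctx
namespace Ctx

variable {V : Type} [AddCommGroup V] [Module ℂ V] (C : Ctx V)

/-- Span of single letters of degree `d`. -/
def Lspan (d : ℤ) : Submodule ℂ V :=
  Submodule.span ℂ {v | ∃ ℓ : Letter, (degL ℓ : ℤ) = d ∧ v = C.ι ℓ}

/-- Span of wick pairs of letters of total degree `d`. -/
def PS (d : ℤ) : Submodule ℂ V :=
  Submodule.span ℂ
    {v | ∃ x y : Letter, (degL x : ℤ) + (degL y : ℤ) = d ∧ v = C.A.wick (C.ι x) (C.ι y)}

lemma negmode_Lspan (x : Letter) (j : ℕ) {e : ℤ} {v : V} (hv : v ∈ C.Lspan e) :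
    C.A.circ (-1 - (j : ℤ)) (C.ι x) v ∈ C.PS (e + (degL x : ℤ) + (j : ℤ)) := by
  induction hv using Submodule.span_induction with
  | mem w hw =>
    obtain ⟨ℓ, hℓ, rfl⟩ := hw
    rw [C.A.circ_neg_mode]
    apply Submodule.smul_mem
    obtain ⟨g, k⟩ := x
    rw [C.ι_up g k j]
    refine Submodule.subset_span ⟨(g, j + k), ℓ, ?_, rfl⟩
    show ((j + k : ℕ) : ℤ) + (degL ℓ : ℤ) = e + ((k : ℕ) : ℤ) + (j : ℤ)
    push_cast
    omega
  | zero => rw [map_zero]; exact Submodule.zero_mem _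
  | add a b _ _ ha hb => rw [map_add]; exact Submodule.add_mem _ ha hb
  | smul t a _ ha => rw [map_smul]; exact Submodule.smul_mem _ _ ha

/-- Nonnegative mode of a wick pair of letters applied to a letter. -/
lemma mode_pair_letter (x y h : Letter) (m : ℕ) :
    C.A.circ (m : ℤ) (C.A.wick (C.ι x) (C.ι y)) (C.ι h)
      ∈ C.Lspan ((degL x : ℤ) + (degL y : ℤ) + (degL h : ℤ) - (m : ℤ)) := by
  choose κ hκ hκ0 using C.pair y h
  choose κ' hκ' hκ0' using C.pair x h
  rw [VA.wick]
  rw [C.A.iterate_par (C.par_ι x) (C.par_ι y) (m : ℤ) (-1) (C.ι h)]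
  apply finsum_mem_submodule
  · intro i
    apply Submodule.smul_mem
    apply Submodule.sub_mem
    · have hcast : ((m : ℤ) + (i : ℤ)) = ((m + i : ℕ) : ℤ) := by push_cast; ring
      rw [hcast, hκ (m + i), map_smul]
      by_cases hz : κ (m + i) = 0
      · rw [hz, zero_smul]; exact Submodule.zero_mem _
      · apply Submodule.smul_mem
        have hd := hκ0 (m + i) hz
        rw [show (-1 : ℤ) - (i : ℤ) = -1 - (i : ℤ) from rfl, C.A.circ_neg_mode]
        apply Submodule.smul_mem
        obtain ⟨g, k⟩ := x
        rw [C.ι_up g k i, C.A.unit_right_wick]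
        refine Submodule.subset_span ⟨(g, i + k), ?_, rfl⟩
        show ((i + k : ℕ) : ℤ) = (degL (g, k) : ℤ) + (degL y : ℤ) + (degL h : ℤ) - (m : ℤ)
        show ((i + k : ℕ) : ℤ) = ((k : ℕ) : ℤ) + (degL y : ℤ) + (degL h : ℤ) - (m : ℤ)
        push_cast
        omega
    · apply Submodule.smul_mem
      rw [hκ' i, map_smul]
      by_cases hz : κ' i = 0
      · rw [hz, zero_smul]; exact Submodule.zero_mem _
      apply Submodule.smul_mem
      have hd := hκ0' i hz
      by_cases hge : (0 : ℤ) ≤ (-1 : ℤ) + (m : ℤ) - (i : ℤ)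
      · obtain ⟨n, hn⟩ := Int.eq_ofNat_of_zero_le hge
        rw [hn, C.A.unit_right_nonneg _ _ (by exact_mod_cast Nat.zero_le n)]
        exact Submodule.zero_mem _
      · have hmi : m ≤ i := by omega
        have hu : ((-1 : ℤ) + (m : ℤ) - (i : ℤ)) = -1 - ((i - m : ℕ) : ℤ) := by
          push_cast
          omega
        rw [hu, C.A.circ_neg_mode]
        apply Submodule.smul_mem
        obtain ⟨g, k⟩ := y
        rw [C.ι_up g k (i - m), C.A.unit_right_wick]
        refine Submodule.subset_span ⟨(g, i - m + k), ?_, rfl⟩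
        show ((i - m + k : ℕ) : ℤ) = (degL x : ℤ) + ((k : ℕ) : ℤ) + (degL h : ℤ) - (m : ℤ)
        push_cast [hmi]
        omega
  · refine ⟨(degL y + degL h + 1) + (degL x + degL h + 1), fun i hi => ?_⟩
    have hz1 : κ (m + i) = 0 := by
      by_contra hz
      have := hκ0 (m + i) hz
      omega
    have hz2 : κ' i = 0 := by
      by_contra hz
      have := hκ0' i hz
      omega
    have e1 : C.A.circ ((m : ℤ) + (i : ℤ)) (C.ι y) (C.ι h) = 0 := by
      rw [show ((m : ℤ) + (i : ℤ)) = ((m + i : ℕ) : ℤ) by push_cast; ring, hκ (m + i), hz1,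
        zero_smul]
    have e2 : C.A.circ (i : ℤ) (C.ι x) (C.ι h) = 0 := by
      rw [hκ' i, hz2, zero_smul]
    rw [e1, e2, map_zero, map_zero, smul_zero, sub_zero, smul_zero]

end Ctx
namespace Ctx

variable {V : Type} [AddCommGroup V] [Module ℂ V] (C : Ctx V)

/-- the even current `L^S + ½ L^E`. -/
noncomputable def L0 : V :=
  (C.A.wick (C.A.D C.β) C.γ + (2 : ℂ) • C.A.wick C.β (C.A.D C.γ))
    + (1 / 2 : ℂ) • (-(C.A.wick (C.A.D C.b) C.c) - (2 : ℂ) • C.A.wick C.b (C.A.D C.c))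

lemma hJ' : C.J = C.A.wick C.L0 C.c + (3 / 4 : ℂ) • C.A.D (C.A.D C.c) := C.hJ

lemma L0_even : C.A.pOf C.L0 false := by
  show C.L0 ∈ C.A.even
  refine Submodule.add_mem _ (Submodule.add_mem _ ?_ (Submodule.smul_mem _ _ ?_))
    (Submodule.smul_mem _ _ (Submodule.sub_mem _ (Submodule.neg_mem _ ?_)
      (Submodule.smul_mem _ _ ?_)))
  · exact C.A.circ_ee _ (C.A.circ_ee _ C.hβ C.A.one_even) C.hγ
  · exact C.A.circ_ee _ C.hβ (C.A.circ_ee _ C.hγ C.A.one_even)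
  · exact C.A.circ_oo _ (C.A.circ_oe _ C.hb C.A.one_even) C.hc
  · exact C.A.circ_oo _ C.hb (C.A.circ_oe _ C.hc C.A.one_even)

lemma J_odd : C.A.pOf C.J true := by
  show C.J ∈ C.A.odd
  rw [C.hJ']
  refine Submodule.add_mem _ ?_ (Submodule.smul_mem _ _ ?_)
  · exact C.A.circ_eo _ (C.L0_even) C.hc
  · exact C.A.circ_oe _ (C.A.circ_oe _ C.hc C.A.one_even) C.A.one_even

lemma wick_pair_mem (x y : Letter) {d : ℤ} (h : (degL x : ℤ) + (degL y : ℤ) = d)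
    {v : V} (hv : v = C.A.wick (C.ι x) (C.ι y)) : v ∈ C.PS d :=
  Submodule.subset_span ⟨x, y, h, hv⟩

lemma L0_PS : C.L0 ∈ C.PS 1 := by
  refine Submodule.add_mem _ (Submodule.add_mem _ ?_ (Submodule.smul_mem _ _ ?_))
    (Submodule.smul_mem _ _ (Submodule.sub_mem _ (Submodule.neg_mem _ ?_)
      (Submodule.smul_mem _ _ ?_)))
  · exact C.wick_pair_mem (G4.gB, 1) (G4.gG, 0) (by norm_num [degL]) rfl
  · exact C.wick_pair_mem (G4.gB, 0) (G4.gG, 1) (by norm_num [degL]) rfl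
  · exact C.wick_pair_mem (G4.gb, 1) (G4.gc, 0) (by norm_num [degL]) rfl
  · exact C.wick_pair_mem (G4.gb, 0) (G4.gc, 1) (by norm_num [degL]) rfl

lemma mode_L0 (g : G4) (m : ℕ) :
    C.A.circ (m : ℤ) C.L0 (C.gen g) ∈ C.Lspan (1 - (m : ℤ)) := by
  have e1 := C.mode_pair_letter (G4.gB, 1) (G4.gG, 0) (g, 0) m
  have e2 := C.mode_pair_letter (G4.gB, 0) (G4.gG, 1) (g, 0) m
  have e3 := C.mode_pair_letter (G4.gb, 1) (G4.gc, 0) (g, 0) m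
  have e4 := C.mode_pair_letter (G4.gb, 0) (G4.gc, 1) (g, 0) m
  norm_num [degL] at e1 e2 e3 e4
  rw [L0]
  simp only [map_add, map_smul, map_neg, map_sub, LinearMap.add_apply, LinearMap.smul_apply,
    LinearMap.neg_apply, LinearMap.sub_apply]
  have hg : C.gen g = C.ι (g, 0) := rfl
  rw [hg]
  exact Submodule.add_mem _ (Submodule.add_mem _ e1 (Submodule.smul_mem _ _ e2))
    (Submodule.smul_mem _ _ (Submodule.sub_mem _ (Submodule.neg_mem _ e3)
      (Submodule.smul_mem _ _ e4)))

end Ctx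
namespace Ctx

variable {V : Type} [AddCommGroup V] [Module ℂ V] (C : Ctx V)

lemma c_gen_mode (g : G4) (j : ℕ) :
    C.A.circ (j : ℤ) C.c (C.gen g) = if g = G4.gb ∧ j = 0 then C.A.one else 0 := by
  cases g <;> cases j
  · simpa [gen] using C.hcb0
  · rename_i n
    rw [if_neg (by simp)]
    exact C.hcb _ (by exact_mod_cast Nat.succ_le_succ (Nat.zero_le n))
  · rw [if_neg (by simp)]; exact C.hcc _ (by exact_mod_cast Nat.zero_le _)
  · rw [if_neg (by simp)]; exact C.hcc _ (by exact_mod_cast Nat.zero_le _)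
  · rw [if_neg (by simp)]; exact (C.hcross _ (by exact_mod_cast Nat.zero_le _)).2.2.1
  · rw [if_neg (by simp)]; exact (C.hcross _ (by exact_mod_cast Nat.zero_le _)).2.2.1
  · rw [if_neg (by simp)]; exact (C.hcross _ (by exact_mod_cast Nat.zero_le _)).2.2.2.1
  · rw [if_neg (by simp)]; exact (C.hcross _ (by exact_mod_cast Nat.zero_le _)).2.2.2.1

lemma Qgen (g : G4) : C.A.circ 0 C.J (C.gen g) ∈ C.PS 1 := by
  rw [C.hJ', map_add, LinearMap.add_apply, map_smul, LinearMap.smul_apply, C.A.circ_zero_D,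
    smul_zero, add_zero, VA.wick,
    C.A.iterate_par (C.L0_even) (show C.A.pOf C.c true from C.hc) 0 (-1) (C.gen g)]
  apply finsum_mem_submodule
  · intro j
    apply Submodule.smul_mem
    apply Submodule.sub_mem
    · rw [show (0 : ℤ) + (j : ℤ) = (j : ℤ) by ring, C.c_gen_mode]
      split_ifs with h
      · obtain ⟨rfl, rfl⟩ := h
        rw [show (-1 : ℤ) - ((0 : ℕ) : ℤ) = -1 by norm_num, C.A.unit_right_wick]
        exact C.L0_PS
      · rw [map_zero]
        exact Submodule.zero_mem _
    · apply Submodule.smul_mem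
      rw [show (-1 : ℤ) + 0 - (j : ℤ) = -1 - (j : ℤ) by ring]
      have h5 := C.negmode_Lspan (G4.gc, 0) j (C.mode_L0 g j)
      rw [show (1 - (j : ℤ) + ((degL ((G4.gc, 0) : Letter)) : ℤ) + (j : ℤ)) = 1 by
        norm_num [degL]] at h5
      exact h5
  · obtain ⟨N, hN⟩ := C.A.truncate C.L0 (C.gen g)
    refine ⟨max 1 N, fun j hj => ?_⟩
    rw [show (0 : ℤ) + (j : ℤ) = (j : ℤ) by ring, C.c_gen_mode, if_neg (by omega), map_zero,
      hN (j : ℤ) (by push_cast; omega), map_zero, smul_zero, sub_zero, smul_zero]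

end Ctx
namespace Ctx

variable {V : Type} [AddCommGroup V] [Module ℂ V] (C : Ctx V)

lemma Q_one : C.A.circ 0 C.J C.A.one = 0 := C.A.unit_right_nonneg 0 C.J le_rfl

lemma Q_wick {x : V} {px : Bool} (hx : C.A.pOf x px) (z : V) :
    C.A.circ 0 C.J (C.A.wick x z)
      = C.A.wick (C.A.circ 0 C.J x) z
        + VA.sgn true px • C.A.wick x (C.A.circ 0 C.J z) := by
  rw [VA.wick, C.A.comm_par C.J_odd hx 0 (-1) z, VA.wick, VA.wick]
  simp only [zero_add]
  rw [finsum_zchoose_zero (fun j : ℕ => C.A.circ (-1 - (j : ℤ)) (C.A.circ (j : ℤ) C.J x) z)]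
  simp only [Nat.cast_zero, sub_zero]
  abel

lemma Q_D {x : V} {px : Bool} (hx : C.A.pOf x px) :
    C.A.circ 0 C.J (C.A.D x) = C.A.D (C.A.circ 0 C.J x) := by
  rw [show C.A.D x = C.A.circ (-2) x C.A.one from rfl,
    C.A.comm_par C.J_odd hx 0 (-2) C.A.one, C.Q_one, map_zero, smul_zero, zero_add]
  simp only [zero_add]
  rw [finsum_zchoose_zero
    (fun j : ℕ => C.A.circ (-2 - (j : ℤ)) (C.A.circ (j : ℤ) C.J x) C.A.one)]
  simp only [Nat.cast_zero, sub_zero]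
  rfl

lemma D_ι (g : G4) (k : ℕ) : C.A.D (C.ι (g, k)) = C.ι (g, k + 1) :=
  (Function.iterate_succ_apply' C.A.D k (C.gen g)).symm

lemma D_PS {d : ℤ} {v : V} (hv : v ∈ C.PS d) : C.A.D v ∈ C.PS (d + 1) := by
  induction hv using Submodule.span_induction with
  | mem w hw =>
    obtain ⟨x, y, hdeg, rfl⟩ := hw
    rw [show C.A.D (C.A.wick (C.ι x) (C.ι y))
        = C.A.circ (-2) (C.A.circ (-1) (C.ι x) (C.ι y)) C.A.one from rfl,
      C.A.iterate_par (C.par_ι x) (C.par_ι y) (-2) (-1) C.A.one]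
    apply finsum_mem_submodule
    · intro j
      apply Submodule.smul_mem
      apply Submodule.sub_mem
      · match j with
        | 0 =>
          rw [show (-2 : ℤ) + ((0 : ℕ) : ℤ) = -2 by norm_num,
            show C.A.circ (-2) (C.ι y) C.A.one = C.A.D (C.ι y) from rfl]
          obtain ⟨gy, ky⟩ := y
          rw [C.D_ι gy ky, show (-1 : ℤ) - ((0 : ℕ) : ℤ) = -1 by norm_num]
          refine C.wick_pair_mem x (gy, ky + 1) ?_ rfl
          show (degL x : ℤ) + ((ky + 1 : ℕ) : ℤ) = d + 1
          have : (degL x : ℤ) + ((ky : ℕ) : ℤ) = d := hdeg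
          push_cast at this ⊢
          omega
        | 1 =>
          rw [show (-2 : ℤ) + ((1 : ℕ) : ℤ) = -1 by norm_num, C.A.unit_right_wick,
            show (-1 : ℤ) - ((1 : ℕ) : ℤ) = -1 - ((1 : ℕ) : ℤ) from rfl, C.A.circ_neg_mode]
          apply Submodule.smul_mem
          obtain ⟨gx, kx⟩ := x
          rw [C.ι_up gx kx 1]
          refine C.wick_pair_mem (gx, 1 + kx) y ?_ rfl
          show ((1 + kx : ℕ) : ℤ) + (degL y : ℤ) = d + 1
          have : ((kx : ℕ) : ℤ) + (degL y : ℤ) = d := hdeg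
          push_cast at this ⊢
          omega
        | (n + 2) =>
          rw [show (-2 : ℤ) + ((n + 2 : ℕ) : ℤ) = ((n : ℕ) : ℤ) by push_cast; ring,
            C.A.unit_right_nonneg _ _ (by exact_mod_cast Nat.zero_le n), map_zero]
          exact Submodule.zero_mem _
      · rw [C.A.unit_right_nonneg _ _ (by exact_mod_cast Nat.zero_le j), map_zero, smul_zero]
        exact Submodule.zero_mem _
    · refine ⟨2, fun j hj => ?_⟩
      match j, hj with
      | (n + 2), _ =>
        rw [show (-2 : ℤ) + ((n + 2 : ℕ) : ℤ) = ((n : ℕ) : ℤ) by push_cast; ring,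
          C.A.unit_right_nonneg _ _ (by exact_mod_cast Nat.zero_le n), map_zero,
          C.A.unit_right_nonneg _ _ (by exact_mod_cast Nat.zero_le (n + 2)), map_zero,
          smul_zero, sub_zero, smul_zero]
  | zero =>
    rw [show C.A.D (0 : V) = 0 by rw [VA.D, map_zero, LinearMap.zero_apply]]
    exact Submodule.zero_mem _
  | add a b _ _ ha hb =>
    rw [show C.A.D (a + b) = C.A.D a + C.A.D b by rw [VA.D, VA.D, VA.D, map_add,
      LinearMap.add_apply]]
    exact Submodule.add_mem _ ha hb
  | smul t a _ ha =>
    rw [show C.A.D (t • a) = t • C.A.D a by rw [VA.D, VA.D, map_smul, LinearMap.smul_apply]]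
    exact Submodule.smul_mem _ _ ha

lemma Q_letter (ℓ : Letter) : C.A.circ 0 C.J (C.ι ℓ) ∈ C.PS ((degL ℓ : ℤ) + 1) := by
  obtain ⟨g, k⟩ := ℓ
  induction k with
  | zero =>
    have := C.Qgen g
    rw [show ((degL ((g, 0) : Letter) : ℤ)) + 1 = 1 by norm_num [degL]]
    exact this
  | succ n ih =>
    rw [← C.D_ι g n, C.Q_D (C.par_ι (g, n))]
    have := C.D_PS ih
    rw [show ((degL ((g, n + 1) : Letter) : ℤ)) + 1 = ((degL ((g, n) : Letter) : ℤ) + 1) + 1 by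
      norm_num [degL]]
    exact this

end Ctx
namespace Ctx

variable {V : Type} [AddCommGroup V] [Module ℂ V] (C : Ctx V)

lemma PS_wick_wlist {d : ℤ} {v : V} (hv : v ∈ C.PS d) (t : List Letter) :
    C.A.wick v (C.A.wlist (t.map C.ι)) ∈ C.GE (d + (totalDeg t : ℤ)) := by
  induction hv using Submodule.span_induction with
  | mem w hw =>
    obtain ⟨x, y, hdeg, rfl⟩ := hw
    have := C.wickpair_wlist x y t
    rw [show ((degL x : ℤ) + (degL y : ℤ) + (totalDeg t : ℤ)) = d + (totalDeg t : ℤ) by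
      rw [← hdeg]] at this
    exact this
  | zero =>
    rw [show C.A.wick (0 : V) (C.A.wlist (t.map C.ι)) = 0 by
      rw [VA.wick, map_zero, LinearMap.zero_apply]]
    exact Submodule.zero_mem _
  | add a b _ _ ha hb =>
    rw [show C.A.wick (a + b) (C.A.wlist (t.map C.ι))
        = C.A.wick a (C.A.wlist (t.map C.ι)) + C.A.wick b (C.A.wlist (t.map C.ι)) by
      rw [VA.wick, VA.wick, VA.wick, map_add, LinearMap.add_apply]]
    exact Submodule.add_mem _ ha hb
  | smul s a _ ha =>
    rw [show C.A.wick (s • a) (C.A.wlist (t.map C.ι)) = s • C.A.wick a (C.A.wlist (t.map C.ι)) by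
      rw [VA.wick, VA.wick, map_smul, LinearMap.smul_apply]]
    exact Submodule.smul_mem _ _ ha

lemma Q_wlist (u : List Letter) :
    C.A.circ 0 C.J (C.A.wlist (u.map C.ι)) ∈ C.GE ((totalDeg u : ℤ) + 1) := by
  induction u with
  | nil =>
    rw [List.map_nil, VA.wlist_nil, C.Q_one]
    exact Submodule.zero_mem _
  | cons a u ih =>
    rw [List.map_cons, VA.wlist_cons, C.Q_wick (C.par_ι a)]
    apply Submodule.add_mem
    · have h1 := C.PS_wick_wlist (C.Q_letter a) u
      refine C.GE_mono ?_ h1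
      rw [totalDeg_cons]
      push_cast
      omega
    · apply Submodule.smul_mem
      have h2 := C.wick_GE a ih
      refine C.GE_mono ?_ h2
      rw [totalDeg_cons]
      push_cast
      omega

end Ctx
namespace VA

variable {V : Type} [AddCommGroup V] [Module ℂ V] (A : VA V)

/-- fold of wick products with seed `z`. -/
def wl (u : List V) (z : V) : V := u.foldr A.wick z

lemma wl_nil (z : V) : A.wl [] z = z := rfl

lemma wl_cons (a : V) (u : List V) (z : V) : A.wl (a :: u) z = A.wick a (A.wl u z) := rfl

lemma wl_append (u v : List V) (z : V) : A.wl (u ++ v) z = A.wl u (A.wl v z) :=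
  List.foldr_append

lemma wlist_eq_wl (u : List V) : A.wlist u = A.wl u A.one := by
  induction u with
  | nil => rfl
  | cons a u ih => rw [VA.wlist, ih]; rfl

lemma wl_smul (u : List V) (s : ℂ) (z : V) : A.wl u (s • z) = s • A.wl u z := by
  induction u with
  | nil => rfl
  | cons a u ih =>
    rw [wl_cons, wl_cons, ih, VA.wick, map_smul]
    rfl

lemma wl_zero (u : List V) : A.wl u (0 : V) = 0 := by
  induction u with
  | nil => rfl
  | cons a u ih => rw [wl_cons, ih, VA.wick, map_zero]

end VA

/-- Koszul sign between two letters. -/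
noncomputable def sgL (x y : Letter) : ℂ := VA.sgn x.1.isOdd y.1.isOdd

namespace Ctx

variable {V : Type} [AddCommGroup V] [Module ℂ V] (C : Ctx V)

lemma swap_letters (x y : Letter) (z : V) :
    C.A.wick (C.ι x) (C.A.wick (C.ι y) z)
      = sgL x y • C.A.wick (C.ι y) (C.A.wick (C.ι x) z) := by
  choose κ hκ hκ0 using C.pair x y
  rw [VA.wick, VA.wick, C.A.comm_par (C.par_ι x) (C.par_ι y) (-1) (-1) z]
  rw [finsum_eq_zero_of_forall_eq_zero (fun j => by
    rw [hκ j, map_smul, LinearMap.smul_apply, C.A.unit_left, if_neg (by omega), smul_zero,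
      smul_zero])]
  rw [add_zero, VA.wick, VA.wick, sgL]

lemma sq_zero {x : Letter} (hx : x.1.isOdd = true) (z : V) :
    C.A.wick (C.ι x) (C.A.wick (C.ι x) z) = 0 := by
  have h := C.swap_letters x x z
  rw [sgL, hx, VA.sgn] at h
  simp only [Bool.and_self, if_true] at h
  have h2 : (2 : ℂ) • C.A.wick (C.ι x) (C.A.wick (C.ι x) z) = 0 := by
    rw [two_smul]
    nth_rewrite 1 [h]
    rw [neg_one_smul]
    abel
  have := smul_eq_zero.mp h2
  simpa using this

lemma pass (u : List Letter) (x : Letter) (z : V) :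
    ∃ s : ℂ, C.A.wick (C.ι x) (C.A.wl (u.map C.ι) z)
      = s • C.A.wl (u.map C.ι) (C.A.wick (C.ι x) z) := by
  induction u generalizing z with
  | nil => exact ⟨1, by rw [one_smul]; rfl⟩
  | cons h u ih =>
    obtain ⟨s, hs⟩ := ih z
    refine ⟨sgL x h * s, ?_⟩
    rw [List.map_cons, VA.wl_cons, C.swap_letters x h, hs, ← smul_smul]
    rw [VA.wl_cons, VA.wick, map_smul]
    rfl

end Ctx
/-- letters of a single group. -/
def lets (g : G4) (ds : List ℕ) : List Letter := ds.map fun k => (g, k)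

lemma lets_cons (g : G4) (k : ℕ) (ds : List ℕ) :
    lets g (k :: ds) = (g, k) :: lets g ds := rfl

namespace Ctx

variable {V : Type} [AddCommGroup V] [Module ℂ V] (C : Ctx V)

lemma insert_fermi (g : G4) (hodd : g.isOdd = true) (k : ℕ) (ds : List ℕ) (z : V)
    (hch : List.Chain' (· > ·) ds) :
    C.A.wick (C.ι (g, k)) (C.A.wl ((lets g ds).map C.ι) z) = 0 ∨
    ∃ (s : ℂ) (ds' : List ℕ), List.Chain' (· > ·) ds' ∧ ds'.sum = k + ds.sum ∧
      (∀ x, ds'.head? = some x → x = k ∨ ds.head? = some x) ∧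
      C.A.wick (C.ι (g, k)) (C.A.wl ((lets g ds).map C.ι) z)
        = s • C.A.wl ((lets g ds').map C.ι) z := by
  induction ds with
  | nil =>
    right
    exact ⟨1, [k], List.isChain_singleton k, by simp, fun x hx => Or.inl (by simpa using hx.symm),
      by rw [one_smul]; rfl⟩
  | cons h tl ih =>
    rcases Nat.lt_trichotomy k h with hlt | rfl | hgt
    · -- k < h : swap and recurse
      rw [lets_cons, List.map_cons, VA.wl_cons, C.swap_letters (g, k) (g, h)]
      rcases ih hch.tail with hzero | ⟨s, ds'', hch'', hsum'', hhead'', heq''⟩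
      · left
        rw [hzero, VA.wick, map_zero, smul_zero]
      · right
        refine ⟨sgL (g, k) (g, h) * s, h :: ds'', ?_, ?_, ?_, ?_⟩
        · rw [List.Chain', List.isChain_cons]
          constructor
          · intro y hy
            rcases hhead'' y hy with rfl | hy'
            · exact hlt
            · exact (List.isChain_cons.1 hch).1 y hy'
          · exact hch''
        · rw [List.sum_cons, hsum'', List.sum_cons]
          omega
        · intro x hx
          exact Or.inr (by simpa using hx)
        · rw [heq'', VA.wick, map_smul, lets_cons, List.map_cons, VA.wl_cons, smul_smul]
          rfl
    · -- k = h : square of an odd letter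
      left
      rw [lets_cons, List.map_cons, VA.wl_cons, C.sq_zero hodd]
    · -- k > h : insert in front
      right
      refine ⟨1, k :: h :: tl, List.isChain_cons_cons.2 ⟨hgt, hch⟩, by simp, fun x hx =>
        Or.inl (by simpa using hx.symm), by rw [one_smul]; rfl⟩

lemma insert_bose (g : G4) (k : ℕ) (ds : List ℕ) (z : V)
    (hch : List.Chain' (· ≥ ·) ds) :
    ∃ (s : ℂ) (ds' : List ℕ), List.Chain' (· ≥ ·) ds' ∧ ds'.sum = k + ds.sum ∧
      (∀ x, ds'.head? = some x → x = k ∨ ds.head? = some x) ∧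
      C.A.wick (C.ι (g, k)) (C.A.wl ((lets g ds).map C.ι) z)
        = s • C.A.wl ((lets g ds').map C.ι) z := by
  induction ds with
  | nil =>
    exact ⟨1, [k], List.isChain_singleton k, by simp, fun x hx => Or.inl (by simpa using hx.symm),
      by rw [one_smul]; rfl⟩
  | cons h tl ih =>
    rcases le_or_gt h k with hge | hlt
    · exact ⟨1, k :: h :: tl, List.isChain_cons_cons.2 ⟨hge, hch⟩, by simp, fun x hx =>
        Or.inl (by simpa using hx.symm), by rw [one_smul]; rfl⟩
    · obtain ⟨s, ds'', hch'', hsum'', hhead'', heq''⟩ := ih hch.tail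
      refine ⟨sgL (g, k) (g, h) * s, h :: ds'', ?_, ?_, ?_, ?_⟩
      · rw [List.Chain', List.isChain_cons]
        constructor
        · intro y hy
          rcases hhead'' y hy with rfl | hy'
          · exact le_of_lt hlt
          · exact (List.isChain_cons.1 hch).1 y hy'
        · exact hch''
      · rw [List.sum_cons, hsum'', List.sum_cons]
        omega
      · intro x hx
        exact Or.inr (by simpa using hx)
      · rw [lets_cons, List.map_cons, VA.wl_cons, C.swap_letters (g, k) (g, h), heq'', VA.wick,
          map_smul, lets_cons, List.map_cons, VA.wl_cons, smul_smul]
        rfl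

end Ctx
/-- letters of a standard monomial. -/
def toLets (ns ms ss ts : List ℕ) : List Letter :=
  lets G4.gb ns ++ lets G4.gc ms ++ lets G4.gB ss ++ lets G4.gG ts

namespace Ctx

variable {V : Type} [AddCommGroup V] [Module ℂ V] (C : Ctx V)

lemma stdMon_eq (ns ms ss ts : List ℕ) :
    VA.stdMon C.A C.b C.c C.β C.γ ns ms ss ts
      = C.A.wl ((toLets ns ms ss ts).map C.ι) C.A.one := by
  rw [VA.stdMon, VA.wlist_eq_wl]
  congr 1
  simp only [toLets, lets, List.map_append, List.map_map]
  rfl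

lemma wl_decomp (ns ms ss ts : List ℕ) (z : V) :
    C.A.wl ((toLets ns ms ss ts).map C.ι) z
      = C.A.wl ((lets G4.gb ns).map C.ι) (C.A.wl ((lets G4.gc ms).map C.ι)
          (C.A.wl ((lets G4.gB ss).map C.ι) (C.A.wl ((lets G4.gG ts).map C.ι) z))) := by
  simp only [toLets, List.map_append, VA.wl_append]

lemma insert_letter (ℓ : Letter) (ns ms ss ts : List ℕ)
    (h1 : List.Chain' (· > ·) ns) (h2 : List.Chain' (· > ·) ms)
    (h3 : List.Chain' (· ≥ ·) ss) (h4 : List.Chain' (· ≥ ·) ts) :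
    ∃ (s : ℂ) (ns' ms' ss' ts' : List ℕ),
      List.Chain' (· > ·) ns' ∧ List.Chain' (· > ·) ms' ∧
      List.Chain' (· ≥ ·) ss' ∧ List.Chain' (· ≥ ·) ts' ∧
      ns'.sum + ms'.sum + ss'.sum + ts'.sum
        = degL ℓ + (ns.sum + ms.sum + ss.sum + ts.sum) ∧
      C.A.wick (C.ι ℓ) (C.A.wl ((toLets ns ms ss ts).map C.ι) C.A.one)
        = s • C.A.wl ((toLets ns' ms' ss' ts').map C.ι) C.A.one := by
  obtain ⟨g, k⟩ := ℓ
  have junk : ∀ hv : C.A.wick (C.ι (g, k)) (C.A.wl ((toLets ns ms ss ts).map C.ι) C.A.one) = 0,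
      ∃ (s : ℂ) (ns' ms' ss' ts' : List ℕ),
      List.Chain' (· > ·) ns' ∧ List.Chain' (· > ·) ms' ∧
      List.Chain' (· ≥ ·) ss' ∧ List.Chain' (· ≥ ·) ts' ∧
      ns'.sum + ms'.sum + ss'.sum + ts'.sum
        = degL ((g, k) : Letter) + (ns.sum + ms.sum + ss.sum + ts.sum) ∧
      C.A.wick (C.ι (g, k)) (C.A.wl ((toLets ns ms ss ts).map C.ι) C.A.one)
        = s • C.A.wl ((toLets ns' ms' ss' ts').map C.ι) C.A.one := by
    intro hv
    refine ⟨0, [], [], [], [degL ((g, k) : Letter) + (ns.sum + ms.sum + ss.sum + ts.sum)],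
      List.isChain_nil, List.isChain_nil, List.isChain_nil, List.isChain_singleton _, by simp,
      by rw [hv, zero_smul]⟩
  cases g with
  | gb =>
    rcases C.insert_fermi G4.gb rfl k ns
        (C.A.wl ((lets G4.gc ms).map C.ι) (C.A.wl ((lets G4.gB ss).map C.ι)
          (C.A.wl ((lets G4.gG ts).map C.ι) C.A.one))) h1 with hz | ⟨s, ns', hch', hsum', _, heq'⟩
    · exact junk (by rw [C.wl_decomp, hz])
    · refine ⟨s, ns', ms, ss, ts, hch', h2, h3, h4, by simp [degL]; omega, ?_⟩
      rw [C.wl_decomp ns ms ss ts, heq', C.wl_decomp ns' ms ss ts]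
  | gc =>
    obtain ⟨s₁, hp⟩ := C.pass (lets G4.gb ns) (G4.gc, k)
      (C.A.wl ((lets G4.gc ms).map C.ι) (C.A.wl ((lets G4.gB ss).map C.ι)
        (C.A.wl ((lets G4.gG ts).map C.ι) C.A.one)))
    rcases C.insert_fermi G4.gc rfl k ms
        (C.A.wl ((lets G4.gB ss).map C.ι) (C.A.wl ((lets G4.gG ts).map C.ι) C.A.one)) h2
      with hz | ⟨s, ms', hch', hsum', _, heq'⟩
    · exact junk (by rw [C.wl_decomp, hp, hz, VA.wl_zero, smul_zero])
    · refine ⟨s₁ * s, ns, ms', ss, ts, h1, hch', h3, h4, by simp [degL]; omega, ?_⟩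
      rw [C.wl_decomp ns ms ss ts, hp, heq', C.wl_decomp ns ms' ss ts]
      simp only [VA.wl_smul, smul_smul]
  | gB =>
    obtain ⟨s₁, hp⟩ := C.pass (lets G4.gb ns) (G4.gB, k)
      (C.A.wl ((lets G4.gc ms).map C.ι) (C.A.wl ((lets G4.gB ss).map C.ι)
        (C.A.wl ((lets G4.gG ts).map C.ι) C.A.one)))
    obtain ⟨s₂, hp₂⟩ := C.pass (lets G4.gc ms) (G4.gB, k)
      (C.A.wl ((lets G4.gB ss).map C.ι) (C.A.wl ((lets G4.gG ts).map C.ι) C.A.one))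
    obtain ⟨s, ss', hch', hsum', _, heq'⟩ := C.insert_bose G4.gB k ss
      (C.A.wl ((lets G4.gG ts).map C.ι) C.A.one) h3
    refine ⟨s₁ * (s₂ * s), ns, ms, ss', ts, h1, h2, hch', h4, by simp [degL]; omega, ?_⟩
    rw [C.wl_decomp ns ms ss ts, hp, hp₂, heq', C.wl_decomp ns ms ss' ts]
    simp only [VA.wl_smul, smul_smul]
  | gG =>
    obtain ⟨s₁, hp⟩ := C.pass (lets G4.gb ns) (G4.gG, k)
      (C.A.wl ((lets G4.gc ms).map C.ι) (C.A.wl ((lets G4.gB ss).map C.ι)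
        (C.A.wl ((lets G4.gG ts).map C.ι) C.A.one)))
    obtain ⟨s₂, hp₂⟩ := C.pass (lets G4.gc ms) (G4.gG, k)
      (C.A.wl ((lets G4.gB ss).map C.ι) (C.A.wl ((lets G4.gG ts).map C.ι) C.A.one))
    obtain ⟨s₃, hp₃⟩ := C.pass (lets G4.gB ss) (G4.gG, k)
      (C.A.wl ((lets G4.gG ts).map C.ι) C.A.one)
    obtain ⟨s, ts', hch', hsum', _, heq'⟩ := C.insert_bose G4.gG k ts C.A.one h4
    refine ⟨s₁ * (s₂ * (s₃ * s)), ns, ms, ss, ts', h1, h2, h3, hch', by simp [degL]; omega, ?_⟩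
    rw [C.wl_decomp ns ms ss ts, hp, hp₂, hp₃, heq', C.wl_decomp ns ms ss ts']
    simp only [VA.wl_smul, smul_smul]

lemma sort (w : List Letter) :
    ∃ (s : ℂ) (ns ms ss ts : List ℕ),
      List.Chain' (· > ·) ns ∧ List.Chain' (· > ·) ms ∧
      List.Chain' (· ≥ ·) ss ∧ List.Chain' (· ≥ ·) ts ∧
      ns.sum + ms.sum + ss.sum + ts.sum = totalDeg w ∧
      C.A.wlist (w.map C.ι) = s • C.A.wl ((toLets ns ms ss ts).map C.ι) C.A.one := by
  induction w with
  | nil =>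
    exact ⟨1, [], [], [], [], List.isChain_nil, List.isChain_nil, List.isChain_nil, List.isChain_nil,
      rfl, by rw [one_smul]; rfl⟩
  | cons ℓ w ih =>
    obtain ⟨s, ns, ms, ss, ts, h1, h2, h3, h4, hsum, heq⟩ := ih
    obtain ⟨s', ns', ms', ss', ts', h1', h2', h3', h4', hsum', heq'⟩ :=
      C.insert_letter ℓ ns ms ss ts h1 h2 h3 h4
    refine ⟨s * s', ns', ms', ss', ts', h1', h2', h3', h4', ?_, ?_⟩
    · rw [hsum', totalDeg_cons]
      omega
    · rw [List.map_cons, VA.wlist_cons, heq, VA.wick, map_smul, ← VA.wick, heq', smul_smul]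

end Ctx
lemma exists_pos_of_sum_pos (l : List ℕ) (h : 0 < l.sum) : ∃ k ∈ l, 0 < k := by
  by_contra hc
  push_neg at hc
  have : l.sum = 0 := by
    apply List.sum_eq_zero
    intro x hx
    exact Nat.le_antisymm (hc x hx) (Nat.zero_le x)
  omega

namespace Ctx

variable {V : Type} [AddCommGroup V] [Module ℂ V] (C : Ctx V)

lemma GE_one_le_DSet :
    C.GE 1 ≤ Submodule.span ℂ (VA.DSet C.A C.b C.c C.β C.γ) := by
  rw [GE]
  apply Submodule.span_le.2
  rintro v ⟨w, hw, rfl⟩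
  obtain ⟨s, ns, ms, ss, ts, h1, h2, h3, h4, hsum, heq⟩ := C.sort w
  rw [heq, ← C.stdMon_eq]
  apply Submodule.smul_mem
  apply Submodule.subset_span
  have hpos : 0 < (ns ++ ms ++ ss ++ ts).sum := by
    have : 1 ≤ totalDeg w := by exact_mod_cast hw
    simp only [List.sum_append]
    omega
  obtain ⟨k, hk, hkpos⟩ := exists_pos_of_sum_pos _ hpos
  exact ⟨ns, ms, ss, ts, h1, h2, h3, h4, ⟨k, hk, hkpos⟩, rfl⟩

lemma main (v : V) (hv : v ∈ Submodule.span ℂ (VA.StdSet C.A C.b C.c C.β C.γ)) :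
    C.A.circ 0 C.J v ∈ Submodule.span ℂ (VA.DSet C.A C.b C.c C.β C.γ) := by
  induction hv using Submodule.span_induction with
  | mem x hx =>
    obtain ⟨ns, ms, ss, ts, h1, h2, h3, h4, rfl⟩ := hx
    have hmon : VA.stdMon C.A C.b C.c C.β C.γ ns ms ss ts
        = C.A.wlist ((toLets ns ms ss ts).map C.ι) := by
      rw [VA.wlist_eq_wl]
      exact C.stdMon_eq ns ms ss ts
    rw [hmon]
    refine C.GE_one_le_DSet (C.GE_mono ?_ (C.Q_wlist (toLets ns ms ss ts)))
    have : (0 : ℤ) ≤ (totalDeg (toLets ns ms ss ts) : ℤ) := by positivity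
    omega
  | zero =>
    rw [map_zero]
    exact Submodule.zero_mem _
  | add a b _ _ ha hb =>
    rw [map_add]
    exact Submodule.add_mem _ ha hb
  | smul t a _ ha =>
    rw [map_smul]
    exact Submodule.smul_mem _ _ ha

end Ctx
/-- In the semi-infinite Weil complex, the image of the BRST
differential `[Q,-]` is contained in the span `𝒟` of standard monomials containing at
least one derivative. -/
theorem stmt10 (V : Type) [AddCommGroup V] [Module ℂ V] (A : VA V)
    (b c β γ : V)
    (hb : b ∈ A.odd) (hc : c ∈ A.odd)
    (hbc0 : A.circ 0 b c = A.one) (hbc : ∀ n : ℤ, 1 ≤ n → A.circ n b c = 0)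
    (hcb0 : A.circ 0 c b = A.one) (hcb : ∀ n : ℤ, 1 ≤ n → A.circ n c b = 0)
    (hbb : ∀ n : ℤ, 0 ≤ n → A.circ n b b = 0)
    (hcc : ∀ n : ℤ, 0 ≤ n → A.circ n c c = 0)
    (hβ : β ∈ A.even) (hγ : γ ∈ A.even)
    (hβγ0 : A.circ 0 β γ = A.one) (hβγ : ∀ n : ℤ, 1 ≤ n → A.circ n β γ = 0)
    (hγβ0 : A.circ 0 γ β = -A.one) (hγβ : ∀ n : ℤ, 1 ≤ n → A.circ n γ β = 0)
    (hββ : ∀ n : ℤ, 0 ≤ n → A.circ n β β = 0)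
    (hγγ : ∀ n : ℤ, 0 ≤ n → A.circ n γ γ = 0)
    (hcross : ∀ n : ℤ, 0 ≤ n →
      A.circ n b β = 0 ∧ A.circ n b γ = 0 ∧ A.circ n c β = 0 ∧ A.circ n c γ = 0 ∧
      A.circ n β b = 0 ∧ A.circ n γ b = 0 ∧ A.circ n β c = 0 ∧ A.circ n γ c = 0)
    (LS LE LW J : V)
    (hLS : LS = A.wick (A.D β) γ + (2 : ℂ) • A.wick β (A.D γ))
    (hLE : LE = -(A.wick (A.D b) c) - (2 : ℂ) • A.wick b (A.D c))
    (hLW : LW = LE + LS)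
    (hJ : J = A.wick (LS + (1 / 2 : ℂ) • LE) c + (3 / 4 : ℂ) • A.D (A.D c))
    :
    ∀ v ∈ Submodule.span ℂ (VA.StdSet A b c β γ),
      A.circ 0 J v ∈ Submodule.span ℂ (VA.DSet A b c β γ) := by
  intro v hv
  exact (Ctx.mk A b c β γ J hb hc hβ hγ hbc0 hbc hcb0 hcb hbb hcc hβγ0 hβγ hγβ0 hγβ hββ hγγ
    hcross (by rw [hJ, hLS, hLE])).main v hv
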